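/- Log-determinant bound for the almost-low-dimensional regularizer (Lemma logdet-2): Let p ≥ 1, 1 ≤ k ≤ p, λ > 0, T ≥ 1, and set λ⊥ = T/(k·log(1 + T/λ)). Let Λ ∈ ℝ^{p×p} be the diagonal matrix whose first k diagonal entries equal λ and whose remaining p−k diagonal entries equal λ⊥. Let a₁, …, a_T ∈ ℝ^p satisfy ‖a_t‖₂ ≤ 1 for every t, and let V_T = Λ + Σ_{t=1}^{T} a_t a_tᵀ. Then log(det(V_T)/det(Λ)) ≤ 2k·log(1 + T/λ). -/

import Mathlib

open Matrix

/-- Log-determinant bound for the almost-low-dimensional regularizer. -/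
lemma my_trace_eq_sum_eigenvalues {n : Type*} [Fintype n] [DecidableEq n]
    {A : Matrix n n ℝ} (hA : A.IsHermitian) :
    A.trace = ∑ i, hA.eigenvalues i := by
  simpa using hA.trace_eq_sum_eigenvalues

lemma my_det_le_prod_diag {n : Type*} [Fintype n] [DecidableEq n]
    {A : Matrix n n ℝ} (hA : A.PosDef) : A.det ≤ ∏ i, A i i := by
  have hd : ∀ i, 0 < A i i := fun i => by
    exact hA.diag_pos
  set E : Matrix n n ℝ := Matrix.diagonal (fun i => (Real.sqrt (A i i))⁻¹) with hE
  have hEH : Eᴴ = E := by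
    simp [hE, Matrix.diagonal_conjTranspose]
  have hB : (E * A * Eᴴ).PosSemidef := hA.posSemidef.mul_mul_conjTranspose_same E
  rw [hEH] at hB
  have hBdiag : ∀ i, (E * A * E) i i = 1 := by
    intro i
    rw [hE]
    rw [Matrix.mul_diagonal, Matrix.diagonal_mul]
    have hs0 : Real.sqrt (A i i) ≠ 0 := ne_of_gt (Real.sqrt_pos.mpr (hd i))
    have hs := Real.mul_self_sqrt (hd i).le
    field_simp
    rw [Real.sq_sqrt (hd i).le]
  -- trace of B is card n
  have htr : (E * A * E).trace = (Fintype.card n : ℝ) := by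
    simp [Matrix.trace, Matrix.diag, hBdiag, Finset.card_univ]
  have hsum : ∑ i, hB.1.eigenvalues i = (Fintype.card n : ℝ) := by
    rw [← my_trace_eq_sum_eigenvalues hB.1, htr]
  -- det B ≤ 1 via x ≤ exp (x - 1)
  have hdetB : (E * A * E).det ≤ 1 := by
    rw [hB.1.det_eq_prod_eigenvalues]
    calc (∏ i, (hB.1.eigenvalues i : ℝ))
        ≤ ∏ i, Real.exp (hB.1.eigenvalues i - 1) := by
          apply Finset.prod_le_prod
          · intro i _; exact hB.eigenvalues_nonneg i
          · intro i _
            have := Real.add_one_le_exp (hB.1.eigenvalues i - 1)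
            linarith
      _ = Real.exp (∑ i, (hB.1.eigenvalues i - 1)) := by
          rw [Real.exp_sum]
      _ = 1 := by
          rw [Finset.sum_sub_distrib, hsum]
          simp [Finset.card_univ]
  have hdetE : E.det = ∏ i, (Real.sqrt (A i i))⁻¹ := by
    simp [hE, Matrix.det_diagonal]
  have hdetB' : (E * A * E).det = A.det * (∏ i, (A i i)⁻¹) := by
    rw [Matrix.det_mul, Matrix.det_mul, hdetE]
    have key : (∏ i, (Real.sqrt (A i i))⁻¹) * (∏ i, (Real.sqrt (A i i))⁻¹)
        = ∏ i, (A i i)⁻¹ := by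
      rw [← Finset.prod_mul_distrib]
      apply Finset.prod_congr rfl
      intro i _
      rw [← mul_inv, Real.mul_self_sqrt (hd i).le]
    rw [mul_comm _ A.det, mul_assoc, key]
  have hprodpos : 0 < ∏ i, A i i := Finset.prod_pos (fun i _ => hd i)
  rw [hdetB'] at hdetB
  rw [Finset.prod_inv_distrib] at hdetB
  rw [mul_inv_le_iff₀ hprodpos, one_mul] at hdetB
  exact hdetB

lemma my_posSemidef_vecMulVec {n : Type*} [Fintype n] (v : n → ℝ) :
    (Matrix.vecMulVec v v).PosSemidef := by
  simpa using Matrix.posSemidef_vecMulVec_self_star v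

lemma my_sum_posSemidef {n : Type*} [Fintype n] {ι : Type*} (s : Finset ι)
    (f : ι → Matrix n n ℝ) (hf : ∀ i ∈ s, (f i).PosSemidef) :
    (∑ i ∈ s, f i).PosSemidef := by
  classical
  induction s using Finset.induction_on with
  | empty => simpa using Matrix.PosSemidef.zero
  | insert _ _ hx ih =>
    rw [Finset.sum_insert hx]
    exact ((hf _ (Finset.mem_insert_self _ _)).add
      (ih (fun i hi => hf i (Finset.mem_insert_of_mem hi))))

/-- Log-determinant bound for the almost-low-dimensional regularizer. -/
theorem logdet_bound_low_dim
    {p : ℕ} (hp : 1 ≤ p) (k : ℕ) (hk1 : 1 ≤ k) (hkp : k ≤ p)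
    (lam : ℝ) (hlam : 0 < lam)
    (T : ℕ) (hT : 1 ≤ T)
    (lamPerp : ℝ) (hlamPerp : lamPerp = (T : ℝ) / (k * Real.log (1 + (T : ℝ) / lam)))
    (Λ : Matrix (Fin p) (Fin p) ℝ)
    (hΛ : Λ = Matrix.diagonal (fun i : Fin p => if (i : ℕ) < k then lam else lamPerp))
    (a : ℕ → Fin p → ℝ)
    (ha : ∀ t ∈ Finset.range T, Real.sqrt (∑ i, a t i ^ 2) ≤ 1)
    (VT : Matrix (Fin p) (Fin p) ℝ)
    (hVT : VT = Λ + ∑ t ∈ Finset.range T, Matrix.vecMulVec (a t) (a t)) :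
    Real.log (VT.det / Λ.det) ≤ 2 * k * Real.log (1 + (T : ℝ) / lam) := by
  set L : ℝ := Real.log (1 + (T : ℝ) / lam) with hLdef
  have hTpos : (0 : ℝ) < T := by exact_mod_cast hT
  have hL : 0 < L := Real.log_pos (by
    have : 0 < (T : ℝ) / lam := div_pos hTpos hlam
    linarith)
  have hkR : (0 : ℝ) < k := by exact_mod_cast hk1
  have hlamPerpPos : 0 < lamPerp := by
    rw [hlamPerp]; positivity
  set d : Fin p → ℝ := fun i => if (i : ℕ) < k then lam else lamPerp with hddef
  have hd : ∀ i, 0 < d i := by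
    intro i; by_cases h : (i : ℕ) < k <;> simp [hddef, h, hlam, hlamPerpPos]
  set S : Fin p → ℝ := fun i => ∑ t ∈ Finset.range T, a t i ^ 2 with hSdef
  have hS0 : ∀ i, 0 ≤ S i := fun i => Finset.sum_nonneg (fun t _ => sq_nonneg _)
  have hSsum : ∑ i, S i ≤ (T : ℝ) := by
    rw [hSdef]
    simp only
    rw [Finset.sum_comm]
    calc ∑ t ∈ Finset.range T, ∑ i, a t i ^ 2
        ≤ ∑ _t ∈ Finset.range T, (1 : ℝ) := by
          apply Finset.sum_le_sum
          intro t ht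
          have h1 := ha t ht
          have h2 : (0:ℝ) ≤ ∑ i, a t i ^ 2 := Finset.sum_nonneg (fun i _ => sq_nonneg _)
          nlinarith [Real.sq_sqrt h2, Real.sqrt_nonneg (∑ i, a t i ^ 2)]
      _ = (T : ℝ) := by simp
  have hSle : ∀ i, S i ≤ (T : ℝ) := by
    intro i
    calc S i ≤ ∑ j, S j := Finset.single_le_sum (fun j _ => hS0 j) (Finset.mem_univ i)
      _ ≤ (T : ℝ) := hSsum
  -- positive definiteness
  have hΛpd : Λ.PosDef := by rw [hΛ]; exact Matrix.PosDef.diagonal hd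
  have hVpd : VT.PosDef := by
    rw [hVT]
    exact hΛpd.add_posSemidef (my_sum_posSemidef _ _ (fun t _ => my_posSemidef_vecMulVec _))
  have hΛdet : Λ.det = ∏ i, d i := by rw [hΛ, Matrix.det_diagonal]
  have hΛdetpos : 0 < Λ.det := hΛpd.det_pos
  have hVdetpos : 0 < VT.det := hVpd.det_pos
  have hVdiag : ∀ i, VT i i = d i + S i := by
    intro i
    rw [hVT, hΛ]
    simp [Matrix.add_apply, Matrix.sum_apply, Matrix.vecMulVec_apply, sq, hddef, hSdef]
  have hHad : VT.det ≤ ∏ i, (d i + S i) := by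
    calc VT.det ≤ ∏ i, VT i i := my_det_le_prod_diag hVpd
      _ = ∏ i, (d i + S i) := Finset.prod_congr rfl (fun i _ => hVdiag i)
  have hdS : ∀ i, 0 < d i + S i := fun i => by linarith [hd i, hS0 i]
  -- main chain
  have step1 : Real.log (VT.det / Λ.det)
      ≤ ∑ i, (Real.log (d i + S i) - Real.log (d i)) := by
    rw [Real.log_div (ne_of_gt hVdetpos) (ne_of_gt hΛdetpos)]
    have h1 : Real.log VT.det ≤ Real.log (∏ i, (d i + S i)) :=
      Real.log_le_log hVdetpos hHad
    have h2 : Real.log (∏ i, (d i + S i)) = ∑ i, Real.log (d i + S i) :=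
      Real.log_prod (fun i _ => ne_of_gt (hdS i))
    have h3 : Real.log Λ.det = ∑ i, Real.log (d i) := by
      rw [hΛdet]
      exact Real.log_prod (fun i _ => ne_of_gt (hd i))
    rw [h3, Finset.sum_sub_distrib]
    have h12 := h1.trans_eq h2
    linarith
  have step2 : ∑ i, (Real.log (d i + S i) - Real.log (d i))
      ≤ ∑ i : Fin p, (if (i : ℕ) < k then L else S i / lamPerp) := by
    apply Finset.sum_le_sum
    intro i _
    by_cases hik : (i : ℕ) < k
    · have hdi : d i = lam := by simp [hddef, hik]
      rw [hdi, if_pos hik]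
      have h1 : Real.log (lam + S i) ≤ Real.log (lam + T) :=
        Real.log_le_log (by linarith [hS0 i]) (by linarith [hSle i])
      have h2 : Real.log (lam + T) - Real.log lam = L := by
        rw [hLdef, ← Real.log_div (by positivity) (ne_of_gt hlam)]
        congr 1
        field_simp
      linarith
    · have hdi : d i = lamPerp := by simp [hddef, hik]
      rw [hdi, if_neg hik]
      have hx : 0 < (lamPerp + S i) / lamPerp := by positivity
      have h1 : Real.log ((lamPerp + S i) / lamPerp) ≤ (lamPerp + S i) / lamPerp - 1 :=
        Real.log_le_sub_one_of_pos hx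
      rw [Real.log_div (by positivity) (ne_of_gt hlamPerpPos)] at h1
      have h2 : (lamPerp + S i) / lamPerp - 1 = S i / lamPerp := by
        field_simp
        ring
      linarith
  have hcard : (Finset.univ.filter fun i : Fin p => (i : ℕ) < k).card = k := by
    have : (Finset.univ.filter fun i : Fin p => (i : ℕ) < k)
        = Finset.map (Fin.castLEEmb hkp) Finset.univ := by
      ext i
      rw [Finset.mem_map]
      simp only [Finset.mem_filter, Finset.mem_univ, true_and]
      constructor
      · intro h
        exact ⟨⟨(i : ℕ), h⟩, Fin.ext rfl⟩
      · rintro ⟨b, rfl⟩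
        simpa [Fin.castLEEmb] using b.isLt
    rw [this, Finset.card_map, Finset.card_univ, Fintype.card_fin]
  have step3 : ∑ i : Fin p, (if (i : ℕ) < k then L else S i / lamPerp)
      ≤ 2 * k * L := by
    rw [Finset.sum_ite]
    have hA : ∑ _i ∈ (Finset.univ.filter fun i : Fin p => (i : ℕ) < k), L
        = (k : ℝ) * L := by
      rw [Finset.sum_const, hcard, nsmul_eq_mul]
    have hB : ∑ i ∈ (Finset.univ.filter fun i : Fin p => ¬ (i : ℕ) < k), S i / lamPerp
        ≤ (k : ℝ) * L := by
      have hTlam : (T : ℝ) / lamPerp = k * L := by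
        rw [hlamPerp]
        field_simp
      calc ∑ i ∈ (Finset.univ.filter fun i : Fin p => ¬ (i : ℕ) < k), S i / lamPerp
          ≤ ∑ i : Fin p, S i / lamPerp := by
            apply Finset.sum_le_sum_of_subset_of_nonneg (Finset.filter_subset _ _)
            intro i _ _
            positivity
        _ = (∑ i, S i) / lamPerp := by rw [Finset.sum_div]
        _ ≤ (T : ℝ) / lamPerp := by gcongr
        _ = k * L := hTlam
    calc (∑ _i ∈ (Finset.univ.filter fun i : Fin p => (i : ℕ) < k), L)
          + ∑ i ∈ (Finset.univ.filter fun i : Fin p => ¬ (i : ℕ) < k), S i / lamPerp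
        ≤ (k : ℝ) * L + (k : ℝ) * L := by rw [hA]; linarith
      _ = 2 * k * L := by ring
  linarith
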